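/- With the data of a non-null standard warped product decomposition of $\mathbb{E}^n_\nu$ in canonical form (as in the preceding context), the map $\psi(p_0,\dots,p_k) = P_0 p_0 + \sum_{i=1}^k \langle a_i,p_0\rangle(p_i - c_i)$ is injective on $N_0 \times N_1 \times \cdots \times N_k$. -/

import Mathlib

/-- Injectivity of the non-null standard warped product decomposition map
`ψ(p₀,…,p_k) = P₀p₀ + ∑ᵢ ⟨aᵢ,p₀⟩(pᵢ - cᵢ)` on `N₀ × N₁ × ⋯ × N_k`. -/
theorem warped_product_injective {V : Type*} [AddCommGroup V] [Module ℝ V]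
    [FiniteDimensional ℝ V]
    (B : LinearMap.BilinForm ℝ V)
    (hsymm : ∀ x y : V, B x y = B y x)
    (hnondeg : ∀ v : V, (∀ w : V, B v w = 0) → v = 0)
    (k : ℕ)
    (W0 : Submodule ℝ V) (Vi : Fin k → Submodule ℝ V)
    (a : Fin k → V)
    (κ : Fin k → ℝ) (hκ : ∀ i, κ i = B (a i) (a i)) (hκ0 : ∀ i, κ i ≠ 0)
    (haorth : ∀ i j, i ≠ j → B (a i) (a j) = 0)
    (haW0 : ∀ i, ∀ w ∈ W0, B (a i) w = 0)
    (haVi : ∀ i j, ∀ v ∈ Vi j, B (a i) v = 0)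
    (hW0Vi : ∀ i, ∀ w ∈ W0, ∀ v ∈ Vi i, B w v = 0)
    (horthij : ∀ i j, i ≠ j → ∀ x ∈ Vi i, ∀ y ∈ Vi j, B x y = 0)
    (hdecomp : (W0 ⊔ (⨆ i, Submodule.span ℝ {a i})) ⊔ (⨆ i, Vi i) = ⊤)
    (hW0nd : ∀ v ∈ W0, (∀ w ∈ W0, B v w = 0) → v = 0)
    (hVind : ∀ i, ∀ v ∈ Vi i, (∀ w ∈ Vi i, B v w = 0) → v = 0)
    (V0 : Submodule ℝ V) (hV0 : V0 = W0 ⊔ (⨆ i, Submodule.span ℝ {a i}))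
    (pbar : V) (hpbar : pbar ∈ V0) (hpa : ∀ i, B pbar (a i) = 1)
    (c : Fin k → V) (hc : ∀ i, c i = pbar - (κ i)⁻¹ • a i)
    (N : Fin k → Set V)
    (hN : ∀ i, N i = {x : V |
      x - c i ∈ Submodule.span ℝ {a i} ⊔ Vi i ∧
      B (x - c i) (x - c i) = 1 / κ i})
    (N0 : Set V) (hN0 : N0 = {p : V | p ∈ V0 ∧ ∀ i, 0 < B (a i) p})
    (P0 : V →ₗ[ℝ] V)
    (hP0mem : ∀ x : V, P0 x ∈ W0)
    (hP0orth : ∀ x : V, ∀ w ∈ W0, B (x - P0 x) w = 0)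
    (ψ : V → (Fin k → V) → V)
    (hψ : ∀ p0 p, ψ p0 p = P0 p0 + ∑ i, B (a i) p0 • (p i - c i)) :
    ∀ p0 ∈ N0, ∀ q0 ∈ N0, ∀ p q : Fin k → V,
      (∀ i, p i ∈ N i) → (∀ i, q i ∈ N i) →
      ψ p0 p = ψ q0 q → p0 = q0 ∧ p = q := by
  intro p0 hp0 q0 hq0 p q hp hq hpq
  rw [hψ, hψ] at hpq
  rw [hN0] at hp0 hq0
  obtain ⟨hp0V, hp0pos⟩ := hp0
  obtain ⟨hq0V, hq0pos⟩ := hq0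
  have hpdec : ∀ i, ∃ α : ℝ, ∃ v ∈ Vi i, p i - c i = α • a i + v := by
    intro i
    have hi := hp i
    rw [hN i] at hi
    obtain ⟨hmem, -⟩ := hi
    rcases Submodule.mem_sup.mp hmem with ⟨y, hy, z, hz, hyz⟩
    rcases Submodule.mem_span_singleton.mp hy with ⟨α, rfl⟩
    exact ⟨α, z, hz, hyz.symm⟩
  have hqdec : ∀ i, ∃ α : ℝ, ∃ v ∈ Vi i, q i - c i = α • a i + v := by
    intro i
    have hi := hq i
    rw [hN i] at hi
    obtain ⟨hmem, -⟩ := hi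
    rcases Submodule.mem_sup.mp hmem with ⟨y, hy, z, hz, hyz⟩
    rcases Submodule.mem_span_singleton.mp hy with ⟨α, rfl⟩
    exact ⟨α, z, hz, hyz.symm⟩
  choose α v hv hvp using hpdec
  choose β w hw hwq using hqdec
  have hpnorm : ∀ i, B (p i - c i) (p i - c i) = 1 / κ i := by
    intro i; have hi := hp i; rw [hN i] at hi; exact hi.2
  have hqnorm : ∀ i, B (q i - c i) (q i - c i) = 1 / κ i := by
    intro i; have hi := hq i; rw [hN i] at hi; exact hi.2
  have Key : ∀ u : V, B u (P0 p0) + ∑ i, B (a i) p0 * B u (p i - c i)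
      = B u (P0 q0) + ∑ i, B (a i) q0 * B u (q i - c i) := by
    intro u
    have h := congrArg (fun x => B u x) hpq
    simpa [map_add, map_sum, map_smul, mul_comm] using h
  have hγ : ∀ j, B (a j) p0 * α j = B (a j) q0 * β j := by
    intro j
    have h := Key (a j)
    have e1 : B (a j) (P0 p0) = 0 := haW0 j _ (hP0mem p0)
    have e2 : B (a j) (P0 q0) = 0 := haW0 j _ (hP0mem q0)
    have e3 : ∀ i, B (a j) (p i - c i) = if i = j then α j * κ j else 0 := by
      intro i
      rw [hvp i, map_add, map_smul]
      rw [haVi j i (v i) (hv i)]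
      by_cases hij : i = j
      · subst hij; simp [hκ i, mul_comm]
      · simp [haorth j i (fun hh => hij hh.symm), hij]
    have e4 : ∀ i, B (a j) (q i - c i) = if i = j then β j * κ j else 0 := by
      intro i
      rw [hwq i, map_add, map_smul]
      rw [haVi j i (w i) (hw i)]
      by_cases hij : i = j
      · subst hij; simp [hκ i, mul_comm]
      · simp [haorth j i (fun hh => hij hh.symm), hij]
    rw [e1, e2] at h
    simp only [e3, e4, mul_ite, mul_zero, Finset.sum_ite_eq', Finset.mem_univ,
      if_true, zero_add] at h
    have hκj := hκ0 j
    have h' : B (a j) p0 * α j * κ j = B (a j) q0 * β j * κ j := by ring_nf; ring_nf at h; linarith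
    exact mul_right_cancel₀ hκj h'
  have hz : ∀ j, B (a j) p0 • v j = B (a j) q0 • w j := by
    intro j
    have hmem : B (a j) p0 • v j - B (a j) q0 • w j ∈ Vi j :=
      Submodule.sub_mem _ (Submodule.smul_mem _ _ (hv j)) (Submodule.smul_mem _ _ (hw j))
    have key : ∀ u ∈ Vi j, B (B (a j) p0 • v j - B (a j) q0 • w j) u = 0 := by
      intro u hu
      have h := Key u
      have e1 : B u (P0 p0) = 0 := by
        rw [hsymm]; exact hW0Vi j _ (hP0mem p0) u hu
      have e2 : B u (P0 q0) = 0 := by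
        rw [hsymm]; exact hW0Vi j _ (hP0mem q0) u hu
      have e3 : ∀ i, B u (p i - c i) = if i = j then B u (v j) else 0 := by
        intro i
        rw [hvp i, map_add, map_smul]
        have ha0 : B u (a i) = 0 := by rw [hsymm]; exact haVi i j u hu
        by_cases hij : i = j
        · subst hij; simp [ha0]
        · have hvi : B u (v i) = 0 := by
            rw [hsymm]; exact horthij i j hij (v i) (hv i) u hu
          simp [ha0, hvi, hij]
      have e4 : ∀ i, B u (q i - c i) = if i = j then B u (w j) else 0 := by
        intro i
        rw [hwq i, map_add, map_smul]
        have ha0 : B u (a i) = 0 := by rw [hsymm]; exact haVi i j u hu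
        by_cases hij : i = j
        · subst hij; simp [ha0]
        · have hwi : B u (w i) = 0 := by
            rw [hsymm]; exact horthij i j hij (w i) (hw i) u hu
          simp [ha0, hwi, hij]
      rw [e1, e2] at h
      simp only [e3, e4, mul_ite, mul_zero, Finset.sum_ite_eq', Finset.mem_univ,
        if_true, zero_add] at h
      rw [map_sub, LinearMap.sub_apply, map_smul, map_smul]
      simp only [LinearMap.smul_apply, smul_eq_mul]
      rw [hsymm (v j) u, hsymm (w j) u]
      linarith
    exact sub_eq_zero.mp (hVind j _ hmem key)
  have hcomp : ∀ j, B (a j) p0 • (p j - c j) = B (a j) q0 • (q j - c j) := by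
    intro j
    rw [hvp j, hwq j, smul_add, smul_add, smul_smul, smul_smul, hγ j, hz j]
  have hst : ∀ j, B (a j) p0 = B (a j) q0 := by
    intro j
    have h := congrArg (fun x => B x x) (hcomp j)
    simp only [map_smul, LinearMap.smul_apply, smul_eq_mul] at h
    rw [hpnorm j, hqnorm j] at h
    have hκj := hκ0 j
    have hsp := hp0pos j
    have htp := hq0pos j
    have h2 : B (a j) p0 ^ 2 = B (a j) q0 ^ 2 := by
      have hh : B (a j) p0 * (B (a j) p0 * (1 / κ j)) = B (a j) q0 * (B (a j) q0 * (1 / κ j)) := h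
      field_simp at hh
      nlinarith [hh]
    nlinarith [h2, hsp, htp]
  have hpq' : p = q := by
    funext j
    have h := hcomp j
    rw [hst j] at h
    have hs0 : B (a j) q0 ≠ 0 := ne_of_gt (hq0pos j)
    have h2 : p j - c j = q j - c j := smul_right_injective V hs0 h
    exact sub_left_injective h2
  -- now p0 = q0
  have hP0eq : P0 p0 = P0 q0 := by
    have hmem : P0 p0 - P0 q0 ∈ W0 := Submodule.sub_mem _ (hP0mem p0) (hP0mem q0)
    refine sub_eq_zero.mp (hW0nd _ hmem ?_)
    intro u hu
    have h := Key u
    have e3 : ∀ i, B u (p i - c i) = 0 := by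
      intro i
      rw [hvp i, map_add, map_smul]
      have ha0 : B u (a i) = 0 := by rw [hsymm]; exact haW0 i u hu
      have hv0 : B u (v i) = 0 := hW0Vi i u hu (v i) (hv i)
      simp [ha0, hv0]
    have e4 : ∀ i, B u (q i - c i) = 0 := by
      intro i
      rw [hwq i, map_add, map_smul]
      have ha0 : B u (a i) = 0 := by rw [hsymm]; exact haW0 i u hu
      have hw0 : B u (w i) = 0 := hW0Vi i u hu (w i) (hw i)
      simp [ha0, hw0]
    simp only [e3, e4, mul_zero, Finset.sum_const_zero, add_zero] at h
    rw [map_sub, LinearMap.sub_apply, hsymm (P0 p0) u, hsymm (P0 q0) u]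
    linarith
  have hd : p0 - q0 ∈ V0 := Submodule.sub_mem _ hp0V hq0V
  rw [hV0] at hd
  rcases Submodule.mem_sup.mp hd with ⟨w0, hw0, y, hy, hsum⟩
  have hy' : y ∈ Submodule.span ℝ (Set.range a) := by
    rwa [← Set.iUnion_singleton_eq_range, Submodule.span_iUnion]
  rcases (Finsupp.mem_span_range_iff_exists_finsupp.mp hy') with ⟨cf, hcf⟩
  have hcf0 : ∀ j, cf j * κ j = 0 := by
    intro j
    have hBd : B (a j) (p0 - q0) = 0 := by
      rw [map_sub]
      have := hst j
      simp [this]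
    rw [← hsum, map_add, haW0 j w0 hw0, ← hcf] at hBd
    rw [map_finsuppSum] at hBd
    simp only [map_smul, smul_eq_mul] at hBd
    have : (cf.sum fun i r => r * B (a j) (a i)) = cf j * κ j := by
      rw [Finsupp.sum]
      rw [Finset.sum_eq_single j]
      · by_cases hj : j ∈ cf.support
        · rw [hκ j, hsymm (a j) (a j)]
        · simp only [Finsupp.notMem_support_iff] at hj
          simp [hj, hκ j, hsymm (a j) (a j)]
      · intro i _ hij
        rw [haorth j i (fun hh => hij hh.symm)]
        ring
      · intro hj
        simp only [Finsupp.notMem_support_iff] at hj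
        simp [hj]
    rw [this] at hBd
    linarith
  have hy0 : y = 0 := by
    rw [← hcf, Finsupp.sum]
    apply Finset.sum_eq_zero
    intro i hi
    have := hcf0 i
    have hci : cf i = 0 := by
      rcases mul_eq_zero.mp this with h' | h'
      · exact h'
      · exact absurd h' (hκ0 i)
    simp [hci]
  have hdW0 : p0 - q0 ∈ W0 := by rw [← hsum, hy0, add_zero]; exact hw0
  have hp0q0 : p0 = q0 := by
    refine sub_eq_zero.mp (hW0nd _ hdW0 ?_)
    intro u hu
    have h1 := hP0orth p0 u hu
    have h2 := hP0orth q0 u hu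
    rw [map_sub, LinearMap.sub_apply] at h1 h2
    have hP := congrArg (fun x => B x u) hP0eq
    rw [map_sub, LinearMap.sub_apply]
    linarith
  exact ⟨hp0q0, hpq'⟩
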